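/- Let G ∈ ℝ^{K×d}, y ∈ ℝ^K, Γ ∈ ℝ^{K×K}, and define ∇Φ(u) = −GᵀΓ(y − Gu). Let A : ℝ^d → ℝ^m be differentiable with Jacobian J_A(u) ∈ ℝ^{m×d}, and let C ∈ ℝ^{d×d} be symmetric positive definite. Suppose (u^{1,∞}, λ^{1,∞}), …, (u^{J,∞}, λ^{J,∞}) ∈ ℝ^d × ℝ^m each satisfy C(∇Φ(u^{j,∞}) + J_A(u^{j,∞})ᵀ λ^{j,∞}) = 0 and A(u^{j,∞}) = 0. Then the ensemble mean m̄∞ = (1/J)∑_j u^{j,∞} satisfies ∇Φ(m̄∞) + (1/J)∑_{j=1}^{J} J_A(u^{j,∞})ᵀ λ^{j,∞} = 0, together with A(u^{j,∞}) = 0 for all j. -/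

import Mathlib

open Matrix

/-- KKT stationarity of the ensemble mean: if each ensemble member
`(u^{j,∞}, λ^{j,∞})` is a steady state of the continuous-time limit DAE of the
constrained EnKF with symmetric positive definite covariance `C`, then the
ensemble mean `m̄∞` satisfies
`∇Φ(m̄∞) + (1/J)∑_j J_A(u^{j,∞})ᵀλ^{j,∞} = 0` and `A(u^{j,∞}) = 0` for all `j`. -/
theorem stmt_13 {K d m J : ℕ} (hJ : 0 < J)
    (G : Matrix (Fin K) (Fin d) ℝ) (y : Fin K → ℝ)
    (Γ : Matrix (Fin K) (Fin K) ℝ)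
    (gradPhi : (Fin d → ℝ) → (Fin d → ℝ))
    (hgradPhi : ∀ u, gradPhi u = -(Gᵀ *ᵥ (Γ *ᵥ (y - G *ᵥ u))))
    (A : (Fin d → ℝ) → (Fin m → ℝ))
    (JA : (Fin d → ℝ) → Matrix (Fin m) (Fin d) ℝ)
    (hJA : ∀ u, HasFDerivAt A
      (LinearMap.toContinuousLinearMap (Matrix.mulVecLin (JA u))) u)
    (C : Matrix (Fin d) (Fin d) ℝ) (hC : C.PosDef)
    (uinf : Fin J → (Fin d → ℝ)) (laminf : Fin J → (Fin m → ℝ))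
    (hsteady : ∀ j, C *ᵥ (gradPhi (uinf j) + (JA (uinf j))ᵀ *ᵥ laminf j) = 0)
    (hfeas : ∀ j, A (uinf j) = 0)
    (mbar : Fin d → ℝ) (hmbar : mbar = (1 / (J : ℝ)) • ∑ j, uinf j) :
    gradPhi mbar + (1 / (J : ℝ)) • ∑ j, (JA (uinf j))ᵀ *ᵥ laminf j = 0
      ∧ ∀ j, A (uinf j) = 0 := by
  have hJne : (J : ℝ) ≠ 0 := Nat.cast_ne_zero.mpr hJ.ne'
  -- Each member satisfies stationarity (C is injective on mulVec)
  have hz : ∀ j, gradPhi (uinf j) + (JA (uinf j))ᵀ *ᵥ laminf j = 0 := by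
    intro j
    by_contra h
    have hpos := hC.dotProduct_mulVec_pos h
    rw [hsteady j] at hpos
    simp at hpos
  have hkey : ∀ j, (JA (uinf j))ᵀ *ᵥ laminf j = -gradPhi (uinf j) := fun j =>
    eq_neg_of_add_eq_zero_right (hz j)
  -- affine form of gradPhi
  have haff : ∀ u, gradPhi u = (Gᵀ * Γ * G) *ᵥ u - Gᵀ *ᵥ (Γ *ᵥ y) := by
    intro u
    rw [hgradPhi u, Matrix.mulVec_sub, Matrix.mulVec_sub, neg_sub,
      Matrix.mulVec_mulVec, Matrix.mulVec_mulVec]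
  have hsum : (1 / (J : ℝ)) • ∑ j, gradPhi (uinf j) = gradPhi mbar := by
    simp only [haff, hmbar]
    rw [Finset.sum_sub_distrib, Finset.sum_const, Finset.card_univ,
      Fintype.card_fin, smul_sub, Matrix.mulVec_smul]
    congr 1
    · congr 1
      exact (map_sum (Gᵀ * Γ * G).mulVecLin uinf Finset.univ).symm
    · rw [← Nat.cast_smul_eq_nsmul ℝ, smul_smul, one_div,
        inv_mul_cancel₀ hJne, one_smul]
  refine ⟨?_, hfeas⟩
  simp only [hkey]
  rw [Finset.sum_neg_distrib, smul_neg, hsum, add_neg_cancel]
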